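/- If a graph G contains a vertex i with three distinct neighbors j, l, m (i.e., G contains an induced star K_{1,3} or triangle-free claw centered at i), then for any labeling, sorting the pair of faces ({i}, {j,l,m}) of the independence complex produces a pair of 2-element sets, one of which contains i together with one of j, l, m, hence is not independent; so Δ(H) is not sortable, where H is the subgraph with edges {i,j}, {i,l}, {i,m}. -/

import Mathlib

/-- The first component of the sorting `sort(F,G)`: the elements at odd
positions (1-indexed) of the weakly increasing list of the multiset union of `F` and `G`. -/
def sortFst (F G : Finset ℕ) : Finset ℕ :=
  ((((F.val + G.val).sort (· ≤ ·)).zipIdx.filter (fun p => p.2 % 2 = 0)).map Prod.fst).toFinset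

/-- The second component of the sorting `sort(F,G)`: the elements at even
positions (1-indexed). -/
def sortSnd (F G : Finset ℕ) : Finset ℕ :=
  ((((F.val + G.val).sort (· ≤ ·)).zipIdx.filter (fun p => p.2 % 2 = 1)).map Prod.fst).toFinset

def SortableWrt (Δ : Set (Finset ℕ)) : Prop :=
  ∀ F ∈ Δ, ∀ G ∈ Δ, sortFst F G ∈ Δ ∧ sortSnd F G ∈ Δ

def IsIndep (G : SimpleGraph ℕ) (F : Finset ℕ) : Prop :=
  ∀ a ∈ F, ∀ b ∈ F, ¬ G.Adj a b

lemma sortFst_of_sort_eq (F G : Finset ℕ) (w x y z : ℕ)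
    (h : (F.val + G.val).sort (· ≤ ·) = [w, x, y, z]) :
    sortFst F G = {w, y} ∧ sortSnd F G = {x, z} := by
  constructor <;> simp [sortFst, sortSnd, h, List.zipIdx, List.filter, Finset.ext_iff]

lemma main_sort (a b c d : ℕ) (hab : a ≠ b) (hac : a ≠ c) (had : a ≠ d)
    (hbc : b ≠ c) (hbd : b ≠ d) (hcd : c ≠ d) :
    (sortFst {a} {b,c,d}).card = 2 ∧ (sortSnd {a} {b,c,d}).card = 2 ∧
    ∃ y, (y = b ∨ y = c ∨ y = d) ∧
      ((a ∈ sortFst {a} {b,c,d} ∧ y ∈ sortFst {a} {b,c,d}) ∨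
       (a ∈ sortSnd {a} {b,c,d} ∧ y ∈ sortSnd {a} {b,c,d})) := by
  set F : Finset ℕ := {a}
  set G : Finset ℕ := ({b,c,d} : Finset ℕ)
  have hGcard : G.card = 3 := by
    simp [G, Finset.card_insert_of_notMem, hbc, hbd, hcd]
  have hlen : ((F.val + G.val).sort (· ≤ ·)).length = 4 := by
    rw [Multiset.length_sort]
    simp only [Multiset.card_add]
    rw [show (Multiset.card F.val) = F.card from rfl, show (Multiset.card G.val) = G.card from rfl]
    simp [F, hGcard]
  have hperm : ((F.val + G.val).sort (· ≤ ·) : Multiset ℕ) = F.val + G.val :=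
    Multiset.sort_eq _ _
  have hnodup : ((F.val + G.val).sort (· ≤ ·)).Nodup := by
    have : (F.val + G.val).Nodup := by
      rw [Multiset.nodup_add]
      refine ⟨F.nodup, G.nodup, ?_⟩
      simp only [Multiset.disjoint_left]
      intro x hx hx'
      simp only [F, G, ← Finset.mem_def, Finset.mem_singleton, Finset.mem_insert] at hx hx'
      subst hx; tauto
    rwa [show ((F.val + G.val).sort (· ≤ ·)).Nodup ↔ _ from by rw [← Multiset.coe_nodup, hperm]]
  have hmem : ∀ t, t ∈ (F.val + G.val).sort (· ≤ ·) ↔ (t = a ∨ t = b ∨ t = c ∨ t = d) := by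
    intro t
    rw [Multiset.mem_sort]
    simp [F, G, ← Finset.mem_def]
  obtain ⟨w, x, y, z, heq⟩ : ∃ w x y z, (F.val + G.val).sort (· ≤ ·) = [w, x, y, z] := by
    match hl : (F.val + G.val).sort (· ≤ ·), hlen with
    | [w, x, y, z], _ => exact ⟨w, x, y, z, rfl⟩
  obtain ⟨h1, h2⟩ := sortFst_of_sort_eq F G w x y z heq
  rw [heq] at hnodup hmem
  simp only [List.nodup_cons, List.mem_cons, List.not_mem_nil, or_false, List.nodup_nil, and_true] at hnodup
  push_neg at hnodup
  obtain ⟨⟨hwx, hwy, hwz⟩, ⟨hxy, hxz⟩, hyz⟩ := hnodup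
  have hcard1 : (sortFst F G).card = 2 := by rw [h1]; simp [Finset.card_insert_of_notMem, hwy]
  have hcard2 : (sortSnd F G).card = 2 := by rw [h2]; simp [Finset.card_insert_of_notMem, hxz]
  refine ⟨hcard1, hcard2, ?_⟩
  have ha : a = w ∨ a = x ∨ a = y ∨ a = z := by
    have := (hmem a).mpr (Or.inl rfl); simpa using this
  have hw := (hmem w).mp (by simp)
  have hx := (hmem x).mp (by simp)
  have hy := (hmem y).mp (by simp)
  have hz := (hmem z).mp (by simp)
  rcases ha with rfl | rfl | rfl | rfl
  · refine ⟨y, ?_, Or.inl ⟨by rw [h1]; simp, by rw [h1]; simp⟩⟩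
    rcases hy with h | h | h | h
    · exact absurd h.symm hwy
    · exact Or.inl h
    · exact Or.inr (Or.inl h)
    · exact Or.inr (Or.inr h)
  · refine ⟨z, ?_, Or.inr ⟨by rw [h2]; simp, by rw [h2]; simp⟩⟩
    rcases hz with h | h | h | h
    · exact absurd h.symm hxz
    · exact Or.inl h
    · exact Or.inr (Or.inl h)
    · exact Or.inr (Or.inr h)
  · refine ⟨w, ?_, Or.inl ⟨by rw [h1]; simp, by rw [h1]; simp⟩⟩
    rcases hw with h | h | h | h
    · exact absurd h hwy
    · exact Or.inl h
    · exact Or.inr (Or.inl h)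
    · exact Or.inr (Or.inr h)
  · refine ⟨x, ?_, Or.inr ⟨by rw [h2]; simp, by rw [h2]; simp⟩⟩
    rcases hx with h | h | h | h
    · exact absurd h hxz
    · exact Or.inl h
    · exact Or.inr (Or.inl h)
    · exact Or.inr (Or.inr h)


theorem stmt_16 (H : SimpleGraph ℕ) (i j l m : ℕ)
    (hdist : ({i, j, l, m} : Finset ℕ).card = 4)
    -- H is the star with center i and leaves j, l, m
    (hH : ∀ a b, H.Adj a b ↔
      ((a = i ∧ (b = j ∨ b = l ∨ b = m)) ∨ (b = i ∧ (a = j ∨ a = l ∨ a = m)))) :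
    (∀ f : ℕ → ℕ, Function.Injective f →
      -- sorting the relabeled pair ({i}, {j,l,m}) gives two 2-element sets ...
      (sortFst (({i} : Finset ℕ).image f) (({j, l, m} : Finset ℕ).image f)).card = 2 ∧
      (sortSnd (({i} : Finset ℕ).image f) (({j, l, m} : Finset ℕ).image f)).card = 2 ∧
      -- ... one of which contains (the label of) i together with one of j, l, m
      (∃ x, (x = j ∨ x = l ∨ x = m) ∧
        ((f i ∈ sortFst (({i} : Finset ℕ).image f) (({j, l, m} : Finset ℕ).image f) ∧
          f x ∈ sortFst (({i} : Finset ℕ).image f) (({j, l, m} : Finset ℕ).image f)) ∨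
         (f i ∈ sortSnd (({i} : Finset ℕ).image f) (({j, l, m} : Finset ℕ).image f) ∧
          f x ∈ sortSnd (({i} : Finset ℕ).image f) (({j, l, m} : Finset ℕ).image f))))) ∧
    -- hence the independence complex of H is not sortable, for any labeling
    (∀ f : ℕ → ℕ, Function.Injective f →
      ¬ SortableWrt {F | ∃ A : Finset ℕ, A ⊆ {i, j, l, m} ∧ IsIndep H A ∧ F = A.image f}) := by
  -- pairwise distinctness
  have h3 : ∀ a b c : ℕ, ({a,b,c} : Finset ℕ).card ≤ 3 := by
    intro a b c
    calc ({a,b,c} : Finset ℕ).card ≤ ({b,c} : Finset ℕ).card + 1 := Finset.card_insert_le _ _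
      _ ≤ (({c} : Finset ℕ).card + 1) + 1 := by gcongr; exact Finset.card_insert_le _ _
      _ ≤ 3 := by simp
  have key : ∀ a b c : ℕ, ({i,j,l,m} : Finset ℕ) ⊆ {a,b,c} → False := by
    intro a b c hsub
    have := Finset.card_le_card hsub
    have := h3 a b c
    omega
  have hij : i ≠ j := by rintro rfl; exact key i l m (by intro t ht; simp at ht ⊢; tauto)
  have hil : i ≠ l := by rintro rfl; exact key i j m (by intro t ht; simp at ht ⊢; tauto)
  have him : i ≠ m := by rintro rfl; exact key i j l (by intro t ht; simp at ht ⊢; tauto)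
  have hjl : j ≠ l := by rintro rfl; exact key i j m (by intro t ht; simp at ht ⊢; tauto)
  have hjm : j ≠ m := by rintro rfl; exact key i j l (by intro t ht; simp at ht ⊢; tauto)
  have hlm : l ≠ m := by rintro rfl; exact key i j l (by intro t ht; simp at ht ⊢; tauto)
  have part1 : ∀ f : ℕ → ℕ, Function.Injective f →
      (sortFst (({i} : Finset ℕ).image f) (({j, l, m} : Finset ℕ).image f)).card = 2 ∧
      (sortSnd (({i} : Finset ℕ).image f) (({j, l, m} : Finset ℕ).image f)).card = 2 ∧
      (∃ x, (x = j ∨ x = l ∨ x = m) ∧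
        ((f i ∈ sortFst (({i} : Finset ℕ).image f) (({j, l, m} : Finset ℕ).image f) ∧
          f x ∈ sortFst (({i} : Finset ℕ).image f) (({j, l, m} : Finset ℕ).image f)) ∨
         (f i ∈ sortSnd (({i} : Finset ℕ).image f) (({j, l, m} : Finset ℕ).image f) ∧
          f x ∈ sortSnd (({i} : Finset ℕ).image f) (({j, l, m} : Finset ℕ).image f)))) := by
    intro f hf
    have him1 : (({i} : Finset ℕ).image f) = {f i} := by simp
    have himg : (({j, l, m} : Finset ℕ).image f) = {f j, f l, f m} := by
      simp [Finset.image_insert]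
    rw [him1, himg]
    obtain ⟨c1, c2, y, hy, hcase⟩ := main_sort (f i) (f j) (f l) (f m)
      (fun h => hij (hf h)) (fun h => hil (hf h)) (fun h => him (hf h))
      (fun h => hjl (hf h)) (fun h => hjm (hf h)) (fun h => hlm (hf h))
    refine ⟨c1, c2, ?_⟩
    rcases hy with rfl | rfl | rfl
    · exact ⟨j, Or.inl rfl, hcase⟩
    · exact ⟨l, Or.inr (Or.inl rfl), hcase⟩
    · exact ⟨m, Or.inr (Or.inr rfl), hcase⟩
  refine ⟨part1, ?_⟩
  intro f hf hS
  set Δ : Set (Finset ℕ) :=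
    {F | ∃ A : Finset ℕ, A ⊆ {i, j, l, m} ∧ IsIndep H A ∧ F = A.image f} with hΔ
  have hF0 : (({i} : Finset ℕ).image f) ∈ Δ := by
    refine ⟨{i}, ?_, ?_, rfl⟩
    · intro t ht; simp at ht ⊢; tauto
    · intro a ha b hb hadj
      simp at ha hb
      subst ha; subst hb
      exact H.irrefl hadj
  have hG0 : (({j, l, m} : Finset ℕ).image f) ∈ Δ := by
    refine ⟨{j, l, m}, ?_, ?_, rfl⟩
    · intro t ht; simp at ht ⊢; tauto
    · intro a ha b hb hadj
      simp at ha hb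
      rw [hH] at hadj
      rcases hadj with ⟨rfl, _⟩ | ⟨rfl, _⟩ <;> tauto
  obtain ⟨hin1, hin2⟩ := hS _ hF0 _ hG0
  obtain ⟨_, _, x, hx, hcase⟩ := part1 f hf
  have hadj : H.Adj i x := (hH i x).mpr (Or.inl ⟨rfl, hx⟩)
  rcases hcase with ⟨hi, hx'⟩ | ⟨hi, hx'⟩
  · obtain ⟨A, hA, hind, hAeq⟩ := hin1
    rw [hAeq] at hi hx'
    simp only [Finset.mem_image] at hi hx'
    obtain ⟨a, ha, ha'⟩ := hi
    obtain ⟨b, hb, hb'⟩ := hx'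
    exact hind a ha b hb (by rw [hf ha', hf hb']; exact hadj)
  · obtain ⟨A, hA, hind, hAeq⟩ := hin2
    rw [hAeq] at hi hx'
    simp only [Finset.mem_image] at hi hx'
    obtain ⟨a, ha, ha'⟩ := hi
    obtain ⟨b, hb, hb'⟩ := hx'
    exact hind a ha b hb (by rw [hf ha', hf hb']; exact hadj)
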